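/- arXiv:2310.07243 — 6 statements merged into one kernel-verified Lean document; each statement's English description precedes it below -/
import Mathlib

section
/- If s' is a RAP-feasible assignment, then the collapsed assignment s defined by s k j := Σ_{ℓ ∈ Fin (L j)} s' k ⟨j, ℓ⟩ is a GAP-feasible assignment, and its GAP objective value Σ_{k,j} b k j · s k j equals the RAP objective value Σ_{k,i} b' k i · s' k i of s'. -/
/-- Collapsing a RAP-feasible assignment tier-by-tier yields a GAP-feasible
assignment with the same objective value. -/
theorem rap_to_gap_feasible {K J : Type*} [Fintype K] [Fintype J]
    (L : J → ℕ) (b : K → J → ℝ)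
    (s' : K → ((j : J) × Fin (L j)) → ℝ)
    (h01 : ∀ k i, s' k i = 0 ∨ s' k i = 1)
    (hslot : ∀ i, ∑ k, s' k i ≤ 1)
    (hobj : ∀ k, ∑ i, s' k i ≤ 1) :
    (∀ k j, (∑ ℓ : Fin (L j), s' k ⟨j, ℓ⟩) = 0 ∨ (∑ ℓ : Fin (L j), s' k ⟨j, ℓ⟩) = 1) ∧
    (∀ j, ∑ k, ∑ ℓ : Fin (L j), s' k ⟨j, ℓ⟩ ≤ (L j : ℝ)) ∧
    (∀ k, ∑ j, ∑ ℓ : Fin (L j), s' k ⟨j, ℓ⟩ ≤ 1) ∧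
    (∑ k, ∑ j, b k j * ∑ ℓ : Fin (L j), s' k ⟨j, ℓ⟩
      = ∑ k, ∑ i : (j : J) × Fin (L j), b k i.1 * s' k i) := by
  have hnn : ∀ k i, 0 ≤ s' k i := fun k i => by rcases h01 k i with h | h <;> simp [h]
  have hsig : ∀ k, ∑ j, ∑ ℓ : Fin (L j), s' k ⟨j, ℓ⟩ = ∑ i : (j : J) × Fin (L j), s' k i := by
    intro k
    rw [← Finset.univ_sigma_univ, Finset.sum_sigma]
  refine ⟨?_, ?_, ?_, ?_⟩
  · intro k j
    by_cases h : ∀ ℓ : Fin (L j), s' k ⟨j, ℓ⟩ = 0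
    · left; simp [h]
    · right
      push_neg at h
      obtain ⟨ℓ, hℓ⟩ := h
      have h1 : s' k ⟨j, ℓ⟩ = 1 := (h01 k ⟨j, ℓ⟩).resolve_left hℓ
      have hle : ∑ ℓ : Fin (L j), s' k ⟨j, ℓ⟩ ≤ 1 := by
        calc ∑ ℓ : Fin (L j), s' k ⟨j, ℓ⟩
            ≤ ∑ j, ∑ ℓ : Fin (L j), s' k ⟨j, ℓ⟩ :=
              Finset.single_le_sum (f := fun j => ∑ ℓ : Fin (L j), s' k ⟨j, ℓ⟩)
                (fun j _ => Finset.sum_nonneg fun ℓ _ => hnn k ⟨j, ℓ⟩) (Finset.mem_univ j)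
          _ = ∑ i, s' k i := hsig k
          _ ≤ 1 := hobj k
      have hge : (1 : ℝ) ≤ ∑ ℓ : Fin (L j), s' k ⟨j, ℓ⟩ := by
        calc (1 : ℝ) = s' k ⟨j, ℓ⟩ := h1.symm
          _ ≤ _ := Finset.single_le_sum (fun ℓ' _ => hnn k ⟨j, ℓ'⟩) (Finset.mem_univ ℓ)
      linarith
  · intro j
    rw [Finset.sum_comm]
    calc ∑ ℓ : Fin (L j), ∑ k, s' k ⟨j, ℓ⟩
        ≤ ∑ _ℓ : Fin (L j), (1 : ℝ) := Finset.sum_le_sum fun ℓ _ => hslot ⟨j, ℓ⟩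
      _ = (L j : ℝ) := by simp
  · intro k
    rw [hsig k]
    exact hobj k
  · refine Finset.sum_congr rfl fun k _ => ?_
    rw [← Finset.univ_sigma_univ, Finset.sum_sigma]
    exact Finset.sum_congr rfl fun j _ => by rw [Finset.mul_sum]
end

section
/- If s is a GAP-feasible assignment, then there exists a RAP-feasible assignment s' such that for every object k and tier j, s k j = Σ_{ℓ ∈ Fin (L j)} s' k ⟨j, ℓ⟩, and the RAP objective value Σ_{k,i} b' k i · s' k i of s' equals the GAP objective value Σ_{k,j} b k j · s k j of s. -/
/-- Every GAP-feasible assignment lifts to a RAP-feasible assignment over the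
slot-expanded index set with the same objective value. -/
theorem gap_to_rap_feasible {K J : Type*} [Fintype K] [Fintype J]
    (L : J → ℕ) (b : K → J → ℝ)
    (s : K → J → ℝ)
    (h01 : ∀ k j, s k j = 0 ∨ s k j = 1)
    (hcap : ∀ j, ∑ k, s k j ≤ (L j : ℝ))
    (hexcl : ∀ k, ∑ j, s k j ≤ 1) :
    ∃ s' : K → ((j : J) × Fin (L j)) → ℝ,
      (∀ k i, s' k i = 0 ∨ s' k i = 1) ∧
      (∀ i, ∑ k, s' k i ≤ 1) ∧
      (∀ k, ∑ i, s' k i ≤ 1) ∧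
      (∀ k j, s k j = ∑ ℓ : Fin (L j), s' k ⟨j, ℓ⟩) ∧
      (∑ k, ∑ i : (j : J) × Fin (L j), b k i.1 * s' k i
        = ∑ k, ∑ j, b k j * s k j) := by
  classical
  set S : J → Finset K := fun j => Finset.univ.filter (fun k => s k j = 1) with hS
  have hcard : ∀ j, (S j).card ≤ L j := by
    intro j
    have h1 : ((S j).card : ℝ) ≤ (L j : ℝ) := by
      calc ((S j).card : ℝ) = ∑ k ∈ S j, s k j := by
            rw [Finset.sum_congr rfl (fun k hk => (Finset.mem_filter.mp hk).2)]
            simp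
            rfl
        _ ≤ ∑ k, s k j := Finset.sum_le_sum_of_subset_of_nonneg (Finset.subset_univ _)
            (fun k _ _ => by rcases h01 k j with h | h <;> simp [h])
        _ ≤ (L j : ℝ) := hcap j
    exact_mod_cast h1
  have hemb : ∀ j, Nonempty ((S j) ↪ Fin (L j)) := by
    intro j
    apply Function.Embedding.nonempty_of_card_le
    simpa [Fintype.card_coe] using hcard j
  have f : ∀ j, (S j) ↪ Fin (L j) := fun j => (hemb j).some
  refine ⟨fun k i => if h : k ∈ S i.1 then (if f i.1 ⟨k, h⟩ = i.2 then (1:ℝ) else 0) else 0,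
    ?_, ?_, ?_, ?_, ?_⟩
  case _ =>
    intro k i
    by_cases h : k ∈ S i.1
    · by_cases h2 : f i.1 ⟨k, h⟩ = i.2 <;> simp [h, h2]
    · simp [h]
  case _ =>
    rintro ⟨j, ℓ⟩
    have key : (∑ k, if h : k ∈ S j then (if f j ⟨k, h⟩ = ℓ then (1:ℝ) else 0) else 0)
        = ((Finset.univ.filter (fun k => ∃ h : k ∈ S j, f j ⟨k, h⟩ = ℓ)).card : ℝ) := by
      rw [Finset.card_filter]
      push_cast
      apply Finset.sum_congr rfl
      intro k _
      by_cases h : k ∈ S j <;> simp [h]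
    rw [key]
    have : (Finset.univ.filter (fun k => ∃ h : k ∈ S j, f j ⟨k, h⟩ = ℓ)).card ≤ 1 := by
      apply Finset.card_le_one.mpr
      intro a ha b hb
      obtain ⟨ha1, ha2⟩ := (Finset.mem_filter.mp ha).2
      obtain ⟨hb1, hb2⟩ := (Finset.mem_filter.mp hb).2
      have := (f j).injective (ha2.trans hb2.symm)
      exact congrArg Subtype.val this
    exact_mod_cast this
  case _ =>
    intro k
    have h4 : ∀ j, s k j = ∑ ℓ : Fin (L j),
        (if h : k ∈ S j then (if f j ⟨k, h⟩ = ℓ then (1:ℝ) else 0) else 0) := by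
      intro j
      by_cases h : k ∈ S j
      · have : s k j = 1 := (Finset.mem_filter.mp h).2
        simp [h, this]
      · have : s k j = 0 := by
          rcases h01 k j with h0 | h1
          · exact h0
          · exact absurd (Finset.mem_filter.mpr ⟨Finset.mem_univ k, h1⟩) h
        simp [h, this]
    calc (∑ i : (j : J) × Fin (L j),
          if h : k ∈ S i.1 then (if f i.1 ⟨k, h⟩ = i.2 then (1:ℝ) else 0) else 0)
        = ∑ j, ∑ ℓ : Fin (L j),
          (if h : k ∈ S j then (if f j ⟨k, h⟩ = ℓ then (1:ℝ) else 0) else 0) := by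
          rw [← Finset.univ_sigma_univ, Finset.sum_sigma]
      _ = ∑ j, s k j := by
          apply Finset.sum_congr rfl; intro j _; exact (h4 j).symm
      _ ≤ 1 := hexcl k
  case _ =>
    intro k j
    by_cases h : k ∈ S j
    · have h1 : s k j = 1 := (Finset.mem_filter.mp h).2
      rw [h1]
      have heq : ∀ ℓ : Fin (L j),
          (if h' : k ∈ S j then (if f j ⟨k, h'⟩ = ℓ then (1:ℝ) else 0) else 0)
          = (if f j ⟨k, h⟩ = ℓ then (1:ℝ) else 0) := fun ℓ => dif_pos h
      rw [Finset.sum_congr rfl (fun ℓ _ => heq ℓ), Finset.sum_ite_eq]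
      simp
    · have : s k j = 0 := by
        rcases h01 k j with h0 | h1
        · exact h0
        · exact absurd (Finset.mem_filter.mpr ⟨Finset.mem_univ k, h1⟩) h
      simp [h, this]
  case _ =>
    apply Finset.sum_congr rfl
    intro k _
    rw [← Finset.univ_sigma_univ, Finset.sum_sigma]
    apply Finset.sum_congr rfl
    intro j _
    show (∑ ℓ : Fin (L j), b k j *
        (if h : k ∈ S j then (if f j ⟨k, h⟩ = ℓ then (1:ℝ) else 0) else 0)) = b k j * s k j
    rw [← Finset.mul_sum]
    congr 1
    by_cases h : k ∈ S j
    · have h1 : s k j = 1 := (Finset.mem_filter.mp h).2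
      rw [h1]
      have heq : ∀ ℓ : Fin (L j),
          (if h' : k ∈ S j then (if f j ⟨k, h'⟩ = ℓ then (1:ℝ) else 0) else 0)
          = (if f j ⟨k, h⟩ = ℓ then (1:ℝ) else 0) := fun ℓ => dif_pos h
      rw [Finset.sum_congr rfl (fun ℓ _ => heq ℓ), Finset.sum_ite_eq]
      simp
    · have : s k j = 0 := by
        rcases h01 k j with h0 | h1
        · exact h0
        · exact absurd (Finset.mem_filter.mpr ⟨Finset.mem_univ k, h1⟩) h
      simp [h, this]
end

section
/- Let E be a finite index set of object–tier pairs with data r, V, c_a, c_e : E → ℝ, a fixed previous state s_prev : E → {0,1}, and ω ∈ ℝ. For e ∈ E define b e := r e · V e − ω · c_a e if s_prev e = 0 and b e := r e · V e + ω · c_e e if s_prev e = 1, and for a new state s : E → {0,1} define the total penalty P(s) := Σ_{e∈E} p e, where p e := c_a e if s e = 1 and s_prev e = 0, p e := c_e e if s e = 0 and s_prev e = 1, and p e := 0 otherwise. Then for any two states s₁, s₂ : E → {0,1}: Σ_e b e · s₁ e − Σ_e b e · s₂ e = (Σ_e r e · V e · s₁ e − ω·P(s₁)) − (Σ_e r e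 · V e · s₂ e − ω·P(s₂)). Consequently, over any family of feasible states, s maximizes Σ_e b e · s e if and only if s maximizes Σ_e r e · V e · s e − ω·P(s). -/
/-- Across any two cache states, the difference of total benefits equals the
difference of drift-minus-penalty objectives; hence maximizing total benefit is
equivalent to maximizing the drift-minus-penalty objective over any family of
feasible states. -/
theorem benefit_maximization_equiv_drift_plus_penalty
    {E : Type*} [Fintype E]
    (r V ca ce sprev : E → ℝ)
    (hsprev : ∀ e, sprev e = 0 ∨ sprev e = 1)
    (ω : ℝ) (b : E → ℝ)
    (hb : ∀ e, b e = if sprev e = 1 then r e * V e + ω * ce e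
                     else r e * V e - ω * ca e)
    (P : (E → ℝ) → ℝ)
    (hP : ∀ s : E → ℝ, P s = ∑ e, (if s e = 1 ∧ sprev e = 0 then ca e
                                   else if s e = 0 ∧ sprev e = 1 then ce e
                                   else 0)) :
    (∀ s₁ s₂ : E → ℝ,
        (∀ e, s₁ e = 0 ∨ s₁ e = 1) → (∀ e, s₂ e = 0 ∨ s₂ e = 1) →
        (∑ e, b e * s₁ e) - (∑ e, b e * s₂ e)
          = ((∑ e, r e * V e * s₁ e) - ω * P s₁)
            - ((∑ e, r e * V e * s₂ e) - ω * P s₂)) ∧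
    (∀ F : Set (E → ℝ), (∀ s ∈ F, ∀ e, s e = 0 ∨ s e = 1) →
        ∀ s ∈ F,
          ((∀ s' ∈ F, ∑ e, b e * s' e ≤ ∑ e, b e * s e) ↔
           (∀ s' ∈ F, (∑ e, r e * V e * s' e) - ω * P s'
              ≤ (∑ e, r e * V e * s e) - ω * P s))) := by
  have key : ∀ s : E → ℝ, (∀ e, s e = 0 ∨ s e = 1) →
      (∑ e, b e * s e)
        = ((∑ e, r e * V e * s e) - ω * P s)
          + ∑ e, (if sprev e = 1 then ω * ce e else 0) := by
    intro s hs
    rw [hP, Finset.mul_sum, ← Finset.sum_sub_distrib, ← Finset.sum_add_distrib]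
    apply Finset.sum_congr rfl
    intro e _
    rw [hb]
    rcases hsprev e with hp | hp <;> rcases hs e with h | h <;>
      simp [hp, h] <;> ring
  constructor
  · intro s₁ s₂ h₁ h₂
    rw [key s₁ h₁, key s₂ h₂]; ring
  · intro F hF s hsF
    constructor
    · intro hmax s' hs'F
      have := hmax s' hs'F
      have h := key s (hF s hsF)
      have h' := key s' (hF s' hs'F)
      linarith
    · intro hmax s' hs'F
      have := hmax s' hs'F
      have h := key s (hF s hsF)
      have h' := key s' (hF s' hs'F)
      linarith
end

section
/- Let N and K be nonempty finite sets with |N| = n. Let C : N × N → ℝ be nonnegative link capacities, A_max : N × K → ℝ nonnegative arrival bounds, and ρ : N → ℝ nonnegative per-object cache rate bounds. Suppose V, V' : N × K → ℝ are nonnegative, μ : N × N × K → ℝ is nonnegative with Σ_{k∈K} μ a b k ≤ C a b for all a, b ∈ N, A : N × K → ℝ satisfies 0 ≤ A n k ≤ A_max n k, R : N × K → ℝ satisfies 0 ≤ R n k ≤ ρ n, and for all n ∈ N, k ∈ K: V' n k ≤ max( max(V n k − Σ_{b∈N} μ n b k, 0) + A n k + Σ_{a∈N} μ a n k − R n k,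 0). Define B := (1/(2n)) · Σ_{n∈N} [ (Σ_{b∈N} C n b)² + 2·(Σ_{b∈N} C n b)·|K|·ρ n + (Σ_{k∈K} A_max n k + Σ_{a∈N} C a n + |K|·ρ n)² ]. Then Σ_{n,k} (V' n k)² − Σ_{n,k} (V n k)² ≤ 2·n·B + 2·Σ_{n,k} V n k · A n k − 2·Σ_{a,b∈N, k∈K} μ a b k · (V a k − V b k) − 2·Σ_{n,k} V n k · R n k. -/
/-- Per-queue drift bound. -/
lemma queue_drift (v v' o i a r : ℝ) (hv : 0 ≤ v) (hv' : 0 ≤ v')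
    (ho : 0 ≤ o) (hi : 0 ≤ i) (ha : 0 ≤ a) (hr : 0 ≤ r)
    (hev : v' ≤ max (max (v - o) 0 + a + i - r) 0) :
    v' ^ 2 - v ^ 2 ≤ (o ^ 2 + (a + i) ^ 2 + r ^ 2 + 2 * o * r)
      + 2 * (v * a) + 2 * (v * i) - 2 * (v * o) - 2 * (v * r) := by
  set w := max (v - o) 0 with hw
  have hw0 : 0 ≤ w := le_max_right _ _
  have hw1 : v - o ≤ w := le_max_left _ _
  have hwv : w ≤ v := max_le (by linarith) hv
  have hwsq : w ^ 2 ≤ (v - o) ^ 2 := by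
    rcases le_total (v - o) 0 with h | h
    · rw [hw, max_eq_right h]; simpa using sq_nonneg (v - o)
    · rw [hw, max_eq_left h]
  have hM : v' ^ 2 ≤ (w + a + i - r) ^ 2 := by
    rcases le_total (w + a + i - r) 0 with h | h
    · rw [max_eq_right h] at hev
      have hz : v' = 0 := le_antisymm hev hv'
      rw [hz]; simpa using sq_nonneg (w + a + i - r)
    · rw [max_eq_left h] at hev
      exact pow_le_pow_left₀ hv' hev 2
  nlinarith [mul_nonneg hw0 hr, mul_nonneg (sub_nonneg.2 hwv) (add_nonneg ha hi),
    mul_nonneg (sub_nonneg.2 hw1) hr, mul_nonneg ha hr, mul_nonneg hi hr]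

/-- Deterministic network-wide Lyapunov drift inequality for the VIP queue
network. -/
theorem network_lyapunov_drift {N K : Type*} [Fintype N] [Fintype K]
    [Nonempty N] [Nonempty K]
    (n : ℕ) (hn : Fintype.card N = n)
    (C : N → N → ℝ) (hC : ∀ a b, 0 ≤ C a b)
    (Amax : N → K → ℝ) (hAmax : ∀ m k, 0 ≤ Amax m k)
    (ρ : N → ℝ) (hρ : ∀ m, 0 ≤ ρ m)
    (V V' : N → K → ℝ)
    (hV : ∀ m k, 0 ≤ V m k) (hV' : ∀ m k, 0 ≤ V' m k)
    (μ : N → N → K → ℝ) (hμ : ∀ a b k, 0 ≤ μ a b k)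
    (hμC : ∀ a b, ∑ k, μ a b k ≤ C a b)
    (A : N → K → ℝ) (hA0 : ∀ m k, 0 ≤ A m k) (hA1 : ∀ m k, A m k ≤ Amax m k)
    (R : N → K → ℝ) (hR0 : ∀ m k, 0 ≤ R m k) (hR1 : ∀ m k, R m k ≤ ρ m)
    (hevo : ∀ m k, V' m k ≤
      max (max (V m k - ∑ b, μ m b k) 0 + A m k + (∑ a, μ a m k) - R m k) 0)
    (B : ℝ)
    (hB : B = (1 / (2 * (n : ℝ))) * ∑ m : N,
      ((∑ b, C m b) ^ 2
        + 2 * (∑ b, C m b) * (Fintype.card K : ℝ) * ρ m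
        + (∑ k, Amax m k + (∑ a, C a m) + (Fintype.card K : ℝ) * ρ m) ^ 2)) :
    (∑ m : N, ∑ k : K, (V' m k) ^ 2) - (∑ m : N, ∑ k : K, (V m k) ^ 2)
      ≤ 2 * (n : ℝ) * B
        + 2 * ∑ m : N, ∑ k : K, V m k * A m k
        - 2 * ∑ a : N, ∑ b : N, ∑ k : K, μ a b k * (V a k - V b k)
        - 2 * ∑ m : N, ∑ k : K, V m k * R m k := by
  have hn0 : 0 < n := hn ▸ Fintype.card_pos
  have hK1 : (1 : ℝ) ≤ (Fintype.card K : ℝ) := by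
    exact_mod_cast Nat.one_le_iff_ne_zero.2 Fintype.card_ne_zero
  have hK0 : (0 : ℝ) ≤ (Fintype.card K : ℝ) := by linarith
  have h2nB : 2 * (n : ℝ) * B = ∑ m : N,
      ((∑ b, C m b) ^ 2
        + 2 * (∑ b, C m b) * (Fintype.card K : ℝ) * ρ m
        + (∑ k, Amax m k + (∑ a, C a m) + (Fintype.card K : ℝ) * ρ m) ^ 2) := by
    rw [hB]
    have hne : (n : ℝ) ≠ 0 := Nat.cast_ne_zero.2 hn0.ne'
    field_simp
  -- per-queue bound
  have key : ∀ m k, (V' m k) ^ 2 - (V m k) ^ 2 ≤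
      ((∑ b, μ m b k) ^ 2 + (A m k + ∑ a, μ a m k) ^ 2 + (R m k) ^ 2
        + 2 * (∑ b, μ m b k) * (R m k))
        + 2 * (V m k * A m k) + 2 * (V m k * (∑ a, μ a m k))
        - 2 * (V m k * (∑ b, μ m b k)) - 2 * (V m k * R m k) := fun m k =>
    queue_drift (V m k) (V' m k) (∑ b, μ m b k) (∑ a, μ a m k) (A m k) (R m k)
      (hV m k) (hV' m k) (Finset.sum_nonneg fun b _ => hμ m b k)
      (Finset.sum_nonneg fun a _ => hμ a m k) (hA0 m k) (hR0 m k) (hevo m k)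
  -- per-node quadratic bound
  have quad : ∀ m : N, ∑ k : K, ((∑ b, μ m b k) ^ 2
        + (A m k + ∑ a, μ a m k) ^ 2 + (R m k) ^ 2
        + 2 * (∑ b, μ m b k) * (R m k)) ≤
      (∑ b, C m b) ^ 2
        + 2 * (∑ b, C m b) * (Fintype.card K : ℝ) * ρ m
        + (∑ k, Amax m k + (∑ a, C a m) + (Fintype.card K : ℝ) * ρ m) ^ 2 := by
    intro m
    have hCout : (0 : ℝ) ≤ ∑ b, C m b := Finset.sum_nonneg fun b _ => hC m b
    have hCin : (0 : ℝ) ≤ ∑ a, C a m := Finset.sum_nonneg fun a _ => hC a m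
    have hout : ∑ k : K, (∑ b, μ m b k) ≤ ∑ b, C m b := by
      rw [Finset.sum_comm]
      exact Finset.sum_le_sum fun b _ => hμC m b
    have hin : ∑ k : K, (∑ a, μ a m k) ≤ ∑ a, C a m := by
      rw [Finset.sum_comm]
      exact Finset.sum_le_sum fun a _ => hμC a m
    have h1 : ∑ k : K, (∑ b, μ m b k) ^ 2 ≤ (∑ b, C m b) ^ 2 := by
      calc ∑ k : K, (∑ b, μ m b k) ^ 2
          ≤ (∑ k : K, (∑ b, μ m b k)) ^ 2 :=
            Finset.sum_sq_le_sq_sum_of_nonneg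
              (fun k _ => Finset.sum_nonneg fun b _ => hμ m b k)
        _ ≤ (∑ b, C m b) ^ 2 :=
            pow_le_pow_left₀
              (Finset.sum_nonneg fun k _ => Finset.sum_nonneg fun b _ => hμ m b k)
              hout 2
    have h2 : ∑ k : K, (A m k + ∑ a, μ a m k) ^ 2 ≤
        (∑ k, Amax m k + (∑ a, C a m)) ^ 2 := by
      calc ∑ k : K, (A m k + ∑ a, μ a m k) ^ 2
          ≤ (∑ k : K, (A m k + ∑ a, μ a m k)) ^ 2 :=
            Finset.sum_sq_le_sq_sum_of_nonneg (fun k _ =>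
              add_nonneg (hA0 m k) (Finset.sum_nonneg fun a _ => hμ a m k))
        _ ≤ (∑ k, Amax m k + (∑ a, C a m)) ^ 2 := by
            apply pow_le_pow_left₀ (Finset.sum_nonneg fun k _ =>
              add_nonneg (hA0 m k) (Finset.sum_nonneg fun a _ => hμ a m k))
            rw [Finset.sum_add_distrib]
            exact add_le_add (Finset.sum_le_sum fun k _ => hA1 m k) hin
    have h3 : ∑ k : K, (R m k) ^ 2 ≤ (Fintype.card K : ℝ) * ρ m ^ 2 := by
      calc ∑ k : K, (R m k) ^ 2 ≤ ∑ _k : K, ρ m ^ 2 :=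
            Finset.sum_le_sum fun k _ =>
              pow_le_pow_left₀ (hR0 m k) (hR1 m k) 2
        _ = (Fintype.card K : ℝ) * ρ m ^ 2 := by
            rw [Finset.sum_const, Finset.card_univ, nsmul_eq_mul]
    have h4 : ∑ k : K, 2 * (∑ b, μ m b k) * (R m k) ≤
        2 * (∑ b, C m b) * (Fintype.card K : ℝ) * ρ m := by
      calc ∑ k : K, 2 * (∑ b, μ m b k) * (R m k)
          ≤ ∑ k : K, 2 * (∑ b, μ m b k) * ρ m :=
            Finset.sum_le_sum fun k _ => mul_le_mul_of_nonneg_left (hR1 m k)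
              (by have := Finset.sum_nonneg fun b (_ : b ∈ Finset.univ) => hμ m b k
                  linarith)
        _ = (∑ k : K, 2 * (∑ b, μ m b k)) * ρ m := (Finset.sum_mul _ _ _).symm
        _ = 2 * (∑ k : K, (∑ b, μ m b k)) * ρ m := by rw [Finset.mul_sum]
        _ ≤ 2 * (∑ b, C m b) * ρ m := by
            apply mul_le_mul_of_nonneg_right _ (hρ m)
            linarith
        _ ≤ 2 * (∑ b, C m b) * (Fintype.card K : ℝ) * ρ m := by
            have h : 2 * (∑ b, C m b) ≤ 2 * (∑ b, C m b) * (Fintype.card K : ℝ) := by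
              nlinarith
            exact mul_le_mul_of_nonneg_right h (hρ m)
    have hS : (0 : ℝ) ≤ ∑ k, Amax m k + (∑ a, C a m) :=
      add_nonneg (Finset.sum_nonneg fun k _ => hAmax m k) hCin
    have h23 : (∑ k, Amax m k + (∑ a, C a m)) ^ 2 + (Fintype.card K : ℝ) * ρ m ^ 2
        ≤ (∑ k, Amax m k + (∑ a, C a m) + (Fintype.card K : ℝ) * ρ m) ^ 2 := by
      nlinarith [mul_nonneg (mul_nonneg hK0 (sub_nonneg.2 hK1)) (sq_nonneg (ρ m)),
        mul_nonneg hS (mul_nonneg hK0 (hρ m))]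
    simp only [Finset.sum_add_distrib]
    linarith
  -- linear identity for the μ term
  have hlin : ∑ a : N, ∑ b : N, ∑ k : K, μ a b k * (V a k - V b k)
      = (∑ m : N, ∑ k : K, V m k * (∑ b, μ m b k))
        - (∑ m : N, ∑ k : K, V m k * (∑ a, μ a m k)) := by
    have e1 : ∑ m : N, ∑ k : K, V m k * (∑ b, μ m b k)
        = ∑ a : N, ∑ b : N, ∑ k : K, μ a b k * V a k := by
      apply Finset.sum_congr rfl
      intro a _
      rw [Finset.sum_comm]
      apply Finset.sum_congr rfl
      intro k _
      rw [Finset.mul_sum]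
      exact Finset.sum_congr rfl fun b _ => by ring
    have e2 : ∑ m : N, ∑ k : K, V m k * (∑ a, μ a m k)
        = ∑ a : N, ∑ b : N, ∑ k : K, μ a b k * V b k := by
      rw [show (∑ a : N, ∑ b : N, ∑ k : K, μ a b k * V b k)
          = ∑ b : N, ∑ a : N, ∑ k : K, μ a b k * V b k from Finset.sum_comm]
      apply Finset.sum_congr rfl
      intro b _
      rw [Finset.sum_comm]
      apply Finset.sum_congr rfl
      intro k _
      rw [Finset.mul_sum]
      exact Finset.sum_congr rfl fun a _ => by ring
    rw [e1, e2]
    simp only [← Finset.sum_sub_distrib, mul_sub]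
  -- assemble
  have step1 : (∑ m : N, ∑ k : K, (V' m k) ^ 2) - (∑ m : N, ∑ k : K, (V m k) ^ 2)
      ≤ ∑ m : N, ∑ k : K,
        (((∑ b, μ m b k) ^ 2 + (A m k + ∑ a, μ a m k) ^ 2 + (R m k) ^ 2
          + 2 * (∑ b, μ m b k) * (R m k))
        + 2 * (V m k * A m k) + 2 * (V m k * (∑ a, μ a m k))
        - 2 * (V m k * (∑ b, μ m b k)) - 2 * (V m k * R m k)) := by
    have h := Finset.sum_le_sum (s := (Finset.univ : Finset N))
      (fun m _ => Finset.sum_le_sum (s := (Finset.univ : Finset K))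
        (fun k _ => key m k))
    calc (∑ m : N, ∑ k : K, (V' m k) ^ 2) - (∑ m : N, ∑ k : K, (V m k) ^ 2)
        = ∑ m : N, ∑ k : K, ((V' m k) ^ 2 - (V m k) ^ 2) := by
          simp [Finset.sum_sub_distrib]
      _ ≤ _ := h
  have step2 : ∑ m : N, ∑ k : K,
        (((∑ b, μ m b k) ^ 2 + (A m k + ∑ a, μ a m k) ^ 2 + (R m k) ^ 2
          + 2 * (∑ b, μ m b k) * (R m k))
        + 2 * (V m k * A m k) + 2 * (V m k * (∑ a, μ a m k))
        - 2 * (V m k * (∑ b, μ m b k)) - 2 * (V m k * R m k))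
      = (∑ m : N, ∑ k : K, ((∑ b, μ m b k) ^ 2 + (A m k + ∑ a, μ a m k) ^ 2
          + (R m k) ^ 2 + 2 * (∑ b, μ m b k) * (R m k)))
        + 2 * (∑ m : N, ∑ k : K, V m k * A m k)
        + 2 * (∑ m : N, ∑ k : K, V m k * (∑ a, μ a m k))
        - 2 * (∑ m : N, ∑ k : K, V m k * (∑ b, μ m b k))
        - 2 * (∑ m : N, ∑ k : K, V m k * R m k) := by
    simp only [Finset.sum_add_distrib, Finset.sum_sub_distrib, ← Finset.mul_sum]
  have quadsum : ∑ m : N, ∑ k : K, ((∑ b, μ m b k) ^ 2 + (A m k + ∑ a, μ a m k) ^ 2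
          + (R m k) ^ 2 + 2 * (∑ b, μ m b k) * (R m k)) ≤ 2 * (n : ℝ) * B := by
    rw [h2nB]
    exact Finset.sum_le_sum fun m _ => quad m
  rw [hlin]
  rw [step2] at step1
  linarith
end

section
/- Let L, p, Q : ℕ → ℝ be nonnegative sequences, and let D ≥ 0, Ψ ∈ ℝ, ε > 0, ω > 0. Suppose that for every t ≥ 1: L (t+1) − L t + ω · p t ≤ D − 2·ε·Q t + ω·Ψ. Then limsup_{T→∞} (1/T) · Σ_{t=1}^{T} p t ≤ D/ω + Ψ. -/
/-- Long-term average penalty bound of the drift-plus-penalty theorem. -/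
theorem dpp_penalty_bound (L p Q : ℕ → ℝ)
    (hL : ∀ t, 0 ≤ L t) (hp : ∀ t, 0 ≤ p t) (hQ : ∀ t, 0 ≤ Q t)
    (D : ℝ) (hD : 0 ≤ D) (Ψ : ℝ) (ε : ℝ) (hε : 0 < ε) (ω : ℝ) (hω : 0 < ω)
    (hrec : ∀ t, 1 ≤ t →
      L (t + 1) - L t + ω * p t ≤ D - 2 * ε * Q t + ω * Ψ) :
    Filter.limsup
      (fun T : ℕ => (1 / (T : ℝ)) * ∑ t ∈ Finset.Icc 1 T, p t)
      Filter.atTop ≤ D / ω + Ψ := by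
  -- telescoping bound
  have key : ∀ T : ℕ, L (T + 1) - L 1 + ω * ∑ t ∈ Finset.Icc 1 T, p t
      ≤ (T : ℝ) * (D + ω * Ψ) := by
    intro T
    induction T with
    | zero => simp
    | succ n ih =>
      rw [Finset.sum_Icc_succ_top (by omega : 1 ≤ n + 1)]
      have hstep := hrec (n + 1) (by omega)
      have h2 : 0 ≤ 2 * ε * Q (n + 1) := mul_nonneg (by positivity) (hQ _)
      push_cast
      nlinarith
  have hbound : ∀ T : ℕ, 1 ≤ T →
      (1 / (T : ℝ)) * ∑ t ∈ Finset.Icc 1 T, p t ≤ D / ω + Ψ + L 1 / (ω * T) := by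
    intro T hT
    have hT0 : (0 : ℝ) < (T : ℝ) := by exact_mod_cast hT
    have h1 := key T
    have hLpos : 0 ≤ L (T + 1) := hL _
    have hsum : ω * ∑ t ∈ Finset.Icc 1 T, p t ≤ (T : ℝ) * (D + ω * Ψ) + L 1 := by
      linarith
    rw [one_div, inv_mul_le_iff₀ hT0]
    have heq : (D / ω + Ψ + L 1 / (ω * T)) * T = ((T : ℝ) * (D + ω * Ψ) + L 1) / ω := by
      field_simp
    rw [mul_comm, heq, le_div_iff₀ hω]
    nlinarith
  -- the comparison function tends to D/ω + Ψ
  have hg : Filter.Tendsto (fun T : ℕ => D / ω + Ψ + L 1 / (ω * T)) Filter.atTop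
      (nhds (D / ω + Ψ)) := by
    have : Filter.Tendsto (fun T : ℕ => L 1 / (ω * T)) Filter.atTop (nhds 0) := by
      have h := Filter.Tendsto.const_div_atTop (g := fun T : ℕ => ω * (T : ℝ))
        (Filter.Tendsto.const_mul_atTop hω tendsto_natCast_atTop_atTop) (L 1)
      exact h
    simpa using Filter.Tendsto.add (tendsto_const_nhds) this
  have hle : ∀ᶠ (T : ℕ) in Filter.atTop, (1 / (T : ℝ)) * ∑ t ∈ Finset.Icc 1 T, p t ≤
      D / ω + Ψ + L 1 / (ω * T) := Filter.eventually_atTop.2 ⟨1, hbound⟩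
  calc Filter.limsup (fun T : ℕ => (1 / (T : ℝ)) * ∑ t ∈ Finset.Icc 1 T, p t) Filter.atTop
      ≤ Filter.limsup (fun T : ℕ => D / ω + Ψ + L 1 / (ω * T)) Filter.atTop := by
        exact Filter.limsup_le_limsup hle
          (Filter.IsCoboundedUnder.of_frequently_ge
            (Filter.Frequently.of_forall (fun T => mul_nonneg (by positivity) (Finset.sum_nonneg fun t _ => hp t))))
          hg.isBoundedUnder_le
    _ = D / ω + Ψ := hg.limsup_eq
end

section
/- Let L, p, Q : ℕ → ℝ be nonnegative sequences, and let D ≥ 0, Ψ ≥ 0, ε > 0, ω ≥ 0. Suppose that for every t ≥ 1: L (t+1) − L t + ω · p t ≤ D − 2·ε·Q t + ω·Ψ. Then limsup_{T→∞} (1/T) · Σ_{t=1}^{T} Q t ≤ D/(2·ε) + ω·Ψ/(2·ε). -/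
/-- Long-term average backlog bound of the drift-plus-penalty theorem. -/
theorem dpp_backlog_bound (L p Q : ℕ → ℝ)
    (hL : ∀ t, 0 ≤ L t) (hp : ∀ t, 0 ≤ p t) (hQ : ∀ t, 0 ≤ Q t)
    (D : ℝ) (hD : 0 ≤ D) (Ψ : ℝ) (hΨ : 0 ≤ Ψ)
    (ε : ℝ) (hε : 0 < ε) (ω : ℝ) (hω : 0 ≤ ω)
    (hrec : ∀ t, 1 ≤ t →
      L (t + 1) - L t + ω * p t ≤ D - 2 * ε * Q t + ω * Ψ) :
    Filter.limsup
      (fun T : ℕ => (1 / (T : ℝ)) * ∑ t ∈ Finset.Icc 1 T, Q t)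
      Filter.atTop ≤ D / (2 * ε) + ω * Ψ / (2 * ε) := by
  set c : ℝ := D / (2 * ε) + ω * Ψ / (2 * ε) with hc
  have h2ε : (0:ℝ) < 2 * ε := by linarith
  -- key summed inequality
  have key : ∀ T : ℕ, 2 * ε * (∑ t ∈ Finset.Icc 1 T, Q t) ≤ T * (D + ω * Ψ) + L 1 := by
    intro T
    have hsame : ∀ f : ℕ → ℝ, (∑ t ∈ Finset.Icc 1 T, f t) = ∑ i ∈ Finset.range T, f (i + 1) := by
      intro f
      induction T with
      | zero => simp
      | succ n ih =>
        rw [Finset.sum_Icc_succ_top (by omega), ih, Finset.sum_range_succ]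
    have hsum : ∑ i ∈ Finset.range T, (L (i + 1 + 1) - L (i + 1) + ω * p (i + 1)) ≤
        ∑ i ∈ Finset.range T, (D - 2 * ε * Q (i + 1) + ω * Ψ) := by
      apply Finset.sum_le_sum
      intro i _
      exact hrec (i + 1) (Nat.le_add_left 1 i)
    have htel : ∑ i ∈ Finset.range T, (L (i + 1 + 1) - L (i + 1)) = L (T + 1) - L 1 := by
      exact Finset.sum_range_sub (fun i => L (i + 1)) T
    rw [Finset.sum_add_distrib, htel, ← Finset.mul_sum] at hsum
    have hsum' : ∑ i ∈ Finset.range T, (D - 2 * ε * Q (i + 1) + ω * Ψ)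
        = T * (D + ω * Ψ) - 2 * ε * ∑ i ∈ Finset.range T, Q (i + 1) := by
      rw [Finset.sum_add_distrib, Finset.sum_sub_distrib, ← Finset.mul_sum]
      simp [Finset.sum_const]
      ring
    rw [hsum'] at hsum
    have hpnn : 0 ≤ ω * ∑ i ∈ Finset.range T, p (i + 1) :=
      mul_nonneg hω (Finset.sum_nonneg fun i _ => hp _)
    have hLnn := hL (T + 1)
    rw [hsame Q]
    linarith
  -- pointwise bound for T ≥ 1
  have hbound : ∀ T : ℕ, 1 ≤ T →
      (1 / (T : ℝ)) * ∑ t ∈ Finset.Icc 1 T, Q t ≤ c + L 1 / (2 * ε) * (1 / T) := by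
    intro T hT
    have hTpos : (0:ℝ) < T := by exact_mod_cast hT
    have hk := key T
    rw [one_div, inv_mul_eq_div, div_le_iff₀ hTpos]
    have hc' : c * (2 * ε) = D + ω * Ψ := by
      rw [hc]; field_simp
    have hL1 : L 1 / (2 * ε) * (2 * ε) = L 1 := by field_simp
    have h1 : (1 / (T : ℝ)) * T = 1 := by field_simp
    have heq : (c + L 1 / (2 * ε) * (↑T)⁻¹) * ↑T = c * ↑T + L 1 / (2 * ε) := by
      field_simp
    have e1 : 2 * ε * (c * ↑T) = ↑T * (D + ω * Ψ) := by rw [← hc']; ring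
    have e2 : 2 * ε * (L 1 / (2 * ε)) = L 1 := by field_simp
    rw [heq]
    have h2 : 2 * ε * (∑ t ∈ Finset.Icc 1 T, Q t) ≤ 2 * ε * (c * ↑T + L 1 / (2 * ε)) := by
      rw [mul_add, e1, e2]; exact hk
    exact le_of_mul_le_mul_left h2 h2ε
  have hfnn : ∀ T : ℕ, 0 ≤ (1 / (T : ℝ)) * ∑ t ∈ Finset.Icc 1 T, Q t := by
    intro T
    exact mul_nonneg (by positivity) (Finset.sum_nonneg fun i _ => hQ _)
  set g : ℕ → ℝ := fun T => c + L 1 / (2 * ε) * (T : ℝ)⁻¹ with hg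
  have hgl : Filter.Tendsto g Filter.atTop (nhds c) := by
    have h0 : Filter.Tendsto (fun T : ℕ => L 1 / (2 * ε) * (1 / (T:ℝ))) Filter.atTop (nhds (L 1 / (2 * ε) * 0)) :=
      tendsto_one_div_atTop_nhds_zero_nat.const_mul (L 1 / (2 * ε))
    have hcc : Filter.Tendsto (fun _ : ℕ => c) Filter.atTop (nhds c) := tendsto_const_nhds
    simpa using hcc.add h0
  have hle : Filter.limsup (fun T : ℕ => (1 / (T : ℝ)) * ∑ t ∈ Finset.Icc 1 T, Q t)
      Filter.atTop ≤ Filter.limsup g Filter.atTop := by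
    apply Filter.limsup_le_limsup
    · filter_upwards [Filter.eventually_ge_atTop 1] with T hT
      simpa [hg, one_div] using hbound T hT
    · exact Filter.IsCoboundedUnder.of_frequently_ge
        (Filter.Frequently.of_forall fun T => hfnn T)
    · exact hgl.isBoundedUnder_le
  rw [hgl.limsup_eq] at hle
  exact hle
end
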